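/- Let S: SU(2)^m → ℂ be given by S(X) = Σ_{(a,b)∈E} 2k_{ab} log⟨-n_{ab}| X_a⁻¹ X_b |n_{ba}⟩ (on the domain where the matrix elements are nonzero), with k_{ab} > 0. Then Re S(X) ≤ 0 everywhere, and Re S(X) = 0 if and only if X̂_a n_{ab} = -X̂_b n_{ba} for every edge (a,b) ∈ E. -/

import Mathlib

open Matrix Complex

/-- The Pauli matrices `σ₁, σ₂, σ₃`. -/
noncomputable def pauli : Fin 3 → Matrix (Fin 2) (Fin 2) ℂ
  | 0 => !![0, 1; 1, 0]
  | 1 => !![0, -Complex.I; Complex.I, 0]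
  | 2 => !![1, 0; 0, -1]

/-- `n·σ` for a vector `n ∈ ℝ³`. -/
noncomputable def dotSigma (n : Fin 3 → ℝ) : Matrix (Fin 2) (Fin 2) ℂ :=
  ∑ i, (n i : ℂ) • pauli i

/-- `v` is a unit-norm `+1`-eigenvector of `n·σ`, i.e. a spin-1/2 coherent state `|n⟩`. -/
def IsCoherentState (n : Fin 3 → ℝ) (v : Fin 2 → ℂ) : Prop :=
  (dotSigma n).mulVec v = v ∧ star v ⬝ᵥ v = 1

lemma dotSigma_eq (x : Fin 3 → ℝ) :
    dotSigma x = !![(x 2 : ℂ), x 0 - Complex.I * x 1; x 0 + Complex.I * x 1, -(x 2 : ℂ)] := by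
  simp [dotSigma, pauli, Fin.sum_univ_three]
  constructor <;> ring

lemma dotSigma_neg (x : Fin 3 → ℝ) : dotSigma (-x) = -dotSigma x := by
  rw [dotSigma_eq, dotSigma_eq]
  ext i j; fin_cases i <;> fin_cases j <;> simp <;> ring

lemma dotSigma_mul_self (x : Fin 3 → ℝ) :
    dotSigma x * dotSigma x = ((∑ j, x j ^ 2 : ℝ) : ℂ) • 1 := by
  rw [dotSigma_eq]
  ext i j
  fin_cases i <;> fin_cases j <;>
    simp [Matrix.mul_apply, Fin.sum_univ_two, Fin.sum_univ_three, Matrix.one_apply] <;>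
    (push_cast; simp [Complex.ext_iff, pow_two]; try ring; try exact ⟨trivial, trivial⟩)

lemma trace_proj (a b : Fin 3 → ℝ) :
    trace (((2⁻¹ : ℂ) • (1 - dotSigma a)) * ((2⁻¹ : ℂ) • (1 + dotSigma b)))
      = (((1 - ∑ j, a j * b j) / 2 : ℝ) : ℂ) := by
  rw [dotSigma_eq, dotSigma_eq]
  simp [trace, Matrix.mul_apply, Fin.sum_univ_two, Fin.sum_univ_three, Matrix.one_apply,
    Matrix.diag]
  push_cast
  simp [Complex.ext_iff]
  constructor <;> ring

lemma overlap_sq (Z : Matrix (Fin 2) (Fin 2) ℂ) (u w : Fin 2 → ℂ) :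
    (star u ⬝ᵥ Z.mulVec w) * (starRingEnd ℂ) (star u ⬝ᵥ Z.mulVec w)
      = trace (vecMulVec u (star u) * Z * vecMulVec w (star w) * Zᴴ) := by
  simp [trace, Matrix.mul_apply, mulVec, dotProduct, vecMulVec, Fin.sum_univ_two,
    Matrix.diag, conjTranspose_apply, map_add, _root_.map_mul, mul_comm, mul_left_comm]
  ring

lemma coherent_outer (x : Fin 3 → ℝ) (v : Fin 2 → ℂ) (h : IsCoherentState x v) :
    vecMulVec v (star v) = (2⁻¹ : ℂ) • (1 + dotSigma x) := by
  obtain ⟨heig, hnorm⟩ := h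
  rw [dotSigma_eq] at heig
  have h0 := congrFun heig 0
  have h1 := congrFun heig 1
  simp [mulVec, dotProduct, Fin.sum_univ_two] at h0 h1
  simp [dotProduct, Fin.sum_univ_two] at hnorm
  have hc0 := congrArg (starRingEnd ℂ) h0
  have hc1 := congrArg (starRingEnd ℂ) h1
  simp only [map_add, _root_.map_mul, map_sub, map_neg, Complex.conj_ofReal,
    Complex.conj_I] at hc0 hc1
  set v0 := v 0; set v1 := v 1
  set c0 := (starRingEnd ℂ) (v 0); set c1 := (starRingEnd ℂ) (v 1)
  set x0 := (x 0 : ℂ); set x1 := (x 1 : ℂ); set x2 := (x 2 : ℂ)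
  ext i j
  fin_cases i <;> fin_cases j <;>
    simp [vecMulVec, dotSigma_eq, Matrix.one_apply, Matrix.smul_apply, Matrix.add_apply]
  · linear_combination ((1+x2)/2)*hnorm - (c0/2)*h0 + (v1/2)*hc1
  · linear_combination ((x0 - Complex.I*x1)/2)*hnorm - (c1/2)*h0 - (v0/2)*hc1
  · linear_combination ((x0 + Complex.I*x1)/2)*hnorm - (c0/2)*h1 - (v1/2)*hc0
  · linear_combination ((1-x2)/2)*hnorm + (c0/2)*h0 - (v1/2)*hc1

lemma coherent_unit (x : Fin 3 → ℝ) (v : Fin 2 → ℂ) (h : IsCoherentState x v) :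
    ∑ j, x j ^ 2 = 1 := by
  have hP := coherent_outer x v h
  have hnorm := h.2
  simp [dotProduct, Fin.sum_univ_two] at hnorm
  have hPP : vecMulVec v (star v) * vecMulVec v (star v) = vecMulVec v (star v) := by
    ext i j
    simp [vecMulVec, Matrix.mul_apply, Fin.sum_univ_two]
    linear_combination (v i * (starRingEnd ℂ) (v j)) * hnorm
  rw [hP] at hPP
  have h00 := congrArg (fun M => M 0 0) hPP
  simp [dotSigma_eq, Matrix.mul_apply, Fin.sum_univ_two, Matrix.one_apply,
    Matrix.smul_apply, Matrix.add_apply, Complex.ext_iff] at h00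
  rw [Fin.sum_univ_three]
  nlinarith [h00.1, h00.2]

lemma trace_conj (U W X1 X2 : Matrix (Fin 2) (Fin 2) ℂ) :
    trace (U * (star X1 * X2) * W * (star X1 * X2)ᴴ)
      = trace (X1 * U * star X1 * (X2 * W * star X2)) := by
  rw [Matrix.star_eq_conjTranspose, conjTranspose_mul, conjTranspose_conjTranspose]
  rw [show U * (X1ᴴ * X2) * W * (X2ᴴ * X1) = U * X1ᴴ * (X2 * W * X2ᴴ) * X1 by
    simp only [Matrix.mul_assoc]]
  rw [trace_mul_comm]
  simp only [Matrix.mul_assoc, Matrix.star_eq_conjTranspose]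

lemma conj_proj (X : Matrix (Fin 2) (Fin 2) ℂ) (hX : X * star X = 1) (x y : Fin 3 → ℝ)
    (h : X * dotSigma x * star X = dotSigma y) (c : ℂ) :
    X * (c • (1 + dotSigma x)) * star X = c • (1 + dotSigma y) := by
  rw [Matrix.mul_smul, Matrix.smul_mul, mul_add, mul_one, add_mul, hX, h]

lemma norm_preserved {X : Matrix (Fin 2) (Fin 2) ℂ} (h1 : X * star X = 1)
    (h2 : star X * X = 1) {x y : Fin 3 → ℝ}
    (hxy : X * dotSigma x * star X = dotSigma y) (hx : ∑ j, x j ^ 2 = 1) :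
    ∑ j, y j ^ 2 = 1 := by
  have hsq : dotSigma y * dotSigma y = 1 := by
    rw [← hxy]
    rw [show X * dotSigma x * star X * (X * dotSigma x * star X)
        = X * (dotSigma x * ((star X * X) * (dotSigma x * star X))) by
      simp only [Matrix.mul_assoc]]
    rw [h2, Matrix.one_mul]
    rw [show X * (dotSigma x * (dotSigma x * star X))
        = X * (dotSigma x * dotSigma x) * star X by simp only [Matrix.mul_assoc]]
    rw [dotSigma_mul_self, hx]
    simp [h1]
  rw [dotSigma_mul_self] at hsq
  have h00 := congrArg (fun M => M 0 0) hsq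
  simp [Matrix.one_apply] at h00
  exact_mod_cast h00

lemma real_helper (a b : Fin 3 → ℝ) (ha : ∑ j, a j ^ 2 = 1) (hb : ∑ j, b j ^ 2 = 1) :
    -1 ≤ (∑ j, a j * b j) ∧ ((∑ j, a j * b j) = -1 ↔ a = -b) := by
  rw [Fin.sum_univ_three] at *
  refine ⟨by nlinarith [sq_nonneg (a 0 + b 0), sq_nonneg (a 1 + b 1), sq_nonneg (a 2 + b 2)],
    ?_, ?_⟩
  · intro h
    have h0 : a 0 + b 0 = 0 := by
      nlinarith [sq_nonneg (a 0 + b 0), sq_nonneg (a 1 + b 1), sq_nonneg (a 2 + b 2)]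
    have h1 : a 1 + b 1 = 0 := by
      nlinarith [sq_nonneg (a 0 + b 0), sq_nonneg (a 1 + b 1), sq_nonneg (a 2 + b 2)]
    have h2 : a 2 + b 2 = 0 := by
      nlinarith [sq_nonneg (a 0 + b 0), sq_nonneg (a 1 + b 1), sq_nonneg (a 2 + b 2)]
    funext j
    fin_cases j <;> simp [Pi.neg_apply] <;> linarith
  · intro h
    subst h
    simp only [Pi.neg_apply] at *
    linear_combination -hb

/-- for the coherent-state action
`S(X) = Σ_{(a,b)∈E} 2k_{ab} log⟨-n_{ab}| X_a⁻¹ X_b |n_{ba}⟩` one has `Re S ≤ 0`, with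
equality iff the critical point equations `X̂_a n_{ab} = -X̂_b n_{ba}` hold on every edge. -/
theorem stmt_13 {m : ℕ} (E : Finset (Fin m × Fin m))
    (k : Fin m × Fin m → ℝ) (hk : ∀ e ∈ E, 0 < k e)
    (n : Fin m × Fin m → Fin 3 → ℝ) (hn : ∀ e ∈ E, ∑ j, n e j ^ 2 = 1)
    (u w : Fin m × Fin m → Fin 2 → ℂ)
    (hu : ∀ e ∈ E, IsCoherentState (-(n e)) (u e))
    (hw : ∀ e ∈ E, IsCoherentState (n e.swap) (w e))
    (X : Fin m → Matrix (Fin 2) (Fin 2) ℂ)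
    (hX : ∀ a, X a ∈ Matrix.specialUnitaryGroup (Fin 2) ℂ)
    (R : Fin m → Matrix (Fin 3) (Fin 3) ℝ)
    (hcover : ∀ a, ∀ x : Fin 3 → ℝ,
      X a * dotSigma x * star (X a) = dotSigma ((R a).mulVec x))
    (hne : ∀ e ∈ E, star (u e) ⬝ᵥ ((X e.1)⁻¹ * X e.2).mulVec (w e) ≠ 0) :
    (∑ e ∈ E, 2 * k e * Complex.log (star (u e) ⬝ᵥ ((X e.1)⁻¹ * X e.2).mulVec (w e))).re ≤ 0
    ∧ ((∑ e ∈ E,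
          2 * k e * Complex.log (star (u e) ⬝ᵥ ((X e.1)⁻¹ * X e.2).mulVec (w e))).re = 0
        ↔ ∀ e ∈ E, (R e.1).mulVec (n e) = -((R e.2).mulVec (n e.swap))) := by
  have hU1 : ∀ a, X a * star (X a) = 1 := fun a =>
    Matrix.mem_unitaryGroup_iff.mp (Matrix.mem_specialUnitaryGroup_iff.mp (hX a)).1
  have hU2 : ∀ a, star (X a) * X a = 1 := fun a =>
    Matrix.mem_unitaryGroup_iff'.mp (Matrix.mem_specialUnitaryGroup_iff.mp (hX a)).1
  have hinv : ∀ a, (X a)⁻¹ = star (X a) := fun a => Matrix.inv_eq_left_inv (hU2 a)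
  have key : ∀ e ∈ E, Complex.normSq (star (u e) ⬝ᵥ ((X e.1)⁻¹ * X e.2).mulVec (w e))
      = (1 - ∑ j, (R e.1).mulVec (n e) j * (R e.2).mulVec (n e.swap) j) / 2 := by
    intro e he
    rw [hinv e.1]
    have h1 := overlap_sq (star (X e.1) * X e.2) (u e) (w e)
    rw [coherent_outer _ _ (hu e he), coherent_outer _ _ (hw e he), trace_conj,
      conj_proj (X e.1) (hU1 e.1) (-(n e)) _ (hcover e.1 (-(n e))) 2⁻¹,
      conj_proj (X e.2) (hU1 e.2) (n e.swap) _ (hcover e.2 (n e.swap)) 2⁻¹,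
      Matrix.mulVec_neg, dotSigma_neg, ← sub_eq_add_neg, trace_proj,
      Complex.mul_conj] at h1
    exact_mod_cast h1
  have hA1 : ∀ e ∈ E, ∑ j, (R e.1).mulVec (n e) j ^ 2 = 1 := fun e he =>
    norm_preserved (hU1 e.1) (hU2 e.1) (hcover e.1 (n e)) (hn e he)
  have hB1 : ∀ e ∈ E, ∑ j, (R e.2).mulVec (n e.swap) j ^ 2 = 1 := fun e he =>
    norm_preserved (hU1 e.2) (hU2 e.2) (hcover e.2 (n e.swap))
      (coherent_unit _ _ (hw e he))
  have hre : (∑ e ∈ E,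
        2 * k e * Complex.log (star (u e) ⬝ᵥ ((X e.1)⁻¹ * X e.2).mulVec (w e))).re
      = ∑ e ∈ E,
        2 * k e * Real.log (norm (star (u e) ⬝ᵥ ((X e.1)⁻¹ * X e.2).mulVec (w e))) := by
    rw [Complex.re_sum]
    refine Finset.sum_congr rfl fun e he => ?_
    simp [Complex.mul_re, Complex.mul_im, Complex.log_re]
  have hfacts : ∀ e ∈ E,
      2 * k e * Real.log (norm (star (u e) ⬝ᵥ ((X e.1)⁻¹ * X e.2).mulVec (w e))) ≤ 0
      ∧ (2 * k e * Real.log (norm (star (u e) ⬝ᵥ ((X e.1)⁻¹ * X e.2).mulVec (w e))) = 0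
        ↔ (R e.1).mulVec (n e) = -((R e.2).mulVec (n e.swap))) := by
    intro e he
    set r := norm (star (u e) ⬝ᵥ ((X e.1)⁻¹ * X e.2).mulVec (w e)) with hrdef
    have hr2 : r ^ 2 = (1 - ∑ j, (R e.1).mulVec (n e) j * (R e.2).mulVec (n e.swap) j) / 2 := by
      rw [hrdef, Complex.sq_norm]; exact key e he
    have hrpos : 0 < r := norm_pos_iff.mpr (hne e he)
    obtain ⟨hge, hiff⟩ := real_helper _ _ (hA1 e he) (hB1 e he)
    have hr_le : r ≤ 1 := by nlinarith
    have hlog : Real.log r ≤ 0 := Real.log_nonpos hrpos.le hr_le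
    constructor
    · have : 0 ≤ 2 * k e := by linarith [hk e he]
      exact mul_nonpos_of_nonneg_of_nonpos this hlog
    · constructor
      · intro h0
        have hkp := hk e he
        have hk' : 2 * k e ≠ 0 := by positivity
        have hlog0 : Real.log r = 0 := by
          rcases mul_eq_zero.mp h0 with h | h
          · exact absurd h hk'
          · exact h
        have hr1 : r = 1 := by
          rcases Real.log_eq_zero.mp hlog0 with h | h | h
          · linarith
          · exact h
          · linarith
        have hr21 : r ^ 2 = 1 := by rw [hr1]; ring
        exact hiff.mp (by linarith)
      · intro h
        have hdot : (∑ j, (R e.1).mulVec (n e) j * (R e.2).mulVec (n e.swap) j) = -1 :=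
          hiff.mpr h
        have : r = 1 := by nlinarith
        rw [this, Real.log_one, mul_zero]
  refine ⟨?_, ?_⟩
  · rw [hre]; exact Finset.sum_nonpos fun e he => (hfacts e he).1
  · rw [hre, Finset.sum_eq_zero_iff_of_nonpos fun e he => (hfacts e he).1]
    exact ⟨fun h e he => (hfacts e he).2.mp (h e he),
      fun h e he => (hfacts e he).2.mpr (h e he)⟩
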